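/- Let P, Q, R, S be n×n complex matrices such that (P,Q,R,S) is a pseudo-block decomposition of N = P+Q+R+S and in addition R^2 = S^2 = 0. Let T = [[P, R], [S, Q]] and write the Drazin inverse of T in block form as T^d = [[A1, A3], [A4, A2]] with n×n blocks. Then the Drazin inverse of N is N^d = A1 + A2 + A3 + A4, and (A1, A2, A3, A4) is a pseudo-block decomposition (i.e., A1·A2 = A2·A1 = 0, A1·A4 = A4·A2 = A2·A3 = A3·A1 = 0) with A3^2 = A4^2 = 0. -/

import Mathlib

open Matrix Finset

/-- `X` is the Drazin inverse of `A`: `A X = X A`, `X A X = X`, and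
`A^(k+1) X = A^k` for some (hence all sufficiently large) `k`. -/
def IsDrazinInverse {ι : Type*} [Fintype ι] [DecidableEq ι]
    (A X : Matrix ι ι ℂ) : Prop :=
  A * X = X * A ∧ X * A * X = X ∧ ∃ k : ℕ, A ^ (k + 1) * X = A ^ k

theorem stmt_3 {d : ℕ} (P Q R S N : Matrix (Fin d) (Fin d) ℂ)
    (hN : N = P + Q + R + S)
    (hPQ : P * Q = 0) (hQP : Q * P = 0)
    (hPS : P * S = 0) (hSQ : S * Q = 0) (hQR : Q * R = 0) (hRP : R * P = 0)
    (hRnil : IsNilpotent R) (hSnil : IsNilpotent S)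
    (hR2 : R ^ 2 = 0) (hS2 : S ^ 2 = 0)
    (Td : Matrix (Fin d ⊕ Fin d) (Fin d ⊕ Fin d) ℂ)
    (hTd : IsDrazinInverse (Matrix.fromBlocks P R S Q) Td)
    (A1 A2 A3 A4 : Matrix (Fin d) (Fin d) ℂ)
    (hblocks : Td = Matrix.fromBlocks A1 A3 A4 A2) :
    IsDrazinInverse N (A1 + A2 + A3 + A4) ∧
      A1 * A2 = 0 ∧ A2 * A1 = 0 ∧
      A1 * A4 = 0 ∧ A4 * A2 = 0 ∧ A2 * A3 = 0 ∧ A3 * A1 = 0 ∧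
      A3 ^ 2 = 0 ∧ A4 ^ 2 = 0 := by
  obtain ⟨hc, hdtd, k, hk⟩ := hTd
  set T : Matrix (Fin d ⊕ Fin d) (Fin d ⊕ Fin d) ℂ := Matrix.fromBlocks P R S Q with hT
  set U : Matrix (Fin d ⊕ Fin d) (Fin d ⊕ Fin d) ℂ := Matrix.fromBlocks 0 1 0 0 with hU
  set L : Matrix (Fin d ⊕ Fin d) (Fin d ⊕ Fin d) ℂ := Matrix.fromBlocks 0 0 1 0 with hL
  set W : Matrix (Fin d ⊕ Fin d) (Fin d ⊕ Fin d) ℂ := 1 + U + L with hW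
  have hS2' : S * S = 0 := by rw [← pow_two]; exact hS2
  have hR2' : R * R = 0 := by rw [← pow_two]; exact hR2
  -- core block computations
  have hTUT : T * U * T = 0 := by
    rw [hT, hU]
    simp [Matrix.fromBlocks_multiply, hPS, hPQ, hS2', hSQ]
  have hTLT : T * L * T = 0 := by
    rw [hT, hL]
    simp [Matrix.fromBlocks_multiply, hRP, hR2', hQP, hQR]
  -- basic Drazin manipulations
  have hD1 : T * Td * Td = Td := by
    calc T * Td * Td = Td * T * Td := by rw [hc]
    _ = Td := hdtd
  have hD2 : Td * Td * T = Td := by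
    calc Td * Td * T = Td * (T * Td) := by rw [mul_assoc, hc]
    _ = Td := by rw [← mul_assoc, hdtd]
  have hDUT : Td * U * T = 0 := by
    calc Td * U * T = Td * Td * T * U * T := by rw [hD2]
    _ = Td * Td * (T * U * T) := by noncomm_ring
    _ = 0 := by rw [hTUT, mul_zero]
  have hTUD : T * U * Td = 0 := by
    calc T * U * Td = T * U * (T * Td * Td) := by rw [hD1]
    _ = T * U * T * (Td * Td) := by noncomm_ring
    _ = 0 := by rw [hTUT, zero_mul]
  have hDUD : Td * U * Td = 0 := by
    calc Td * U * Td = Td * U * (T * Td * Td) := by rw [hD1]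
    _ = Td * U * T * (Td * Td) := by noncomm_ring
    _ = 0 := by rw [hDUT, zero_mul]
  have hDLT : Td * L * T = 0 := by
    calc Td * L * T = Td * Td * T * L * T := by rw [hD2]
    _ = Td * Td * (T * L * T) := by noncomm_ring
    _ = 0 := by rw [hTLT, mul_zero]
  have hTLD : T * L * Td = 0 := by
    calc T * L * Td = T * L * (T * Td * Td) := by rw [hD1]
    _ = T * L * T * (Td * Td) := by noncomm_ring
    _ = 0 := by rw [hTLT, zero_mul]
  have hDLD : Td * L * Td = 0 := by
    calc Td * L * Td = Td * L * (T * Td * Td) := by rw [hD1]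
    _ = Td * L * T * (Td * Td) := by noncomm_ring
    _ = 0 := by rw [hDLT, zero_mul]
  -- block relations for the Ai
  have h0U : Matrix.fromBlocks (A1 * A4) (A1 * A2) (A4 * A4) (A4 * A2)
      = Matrix.fromBlocks 0 0 0 (0 : Matrix (Fin d) (Fin d) ℂ) := by
    rw [Matrix.fromBlocks_zero, ← hDUD, hblocks, hU]
    simp [Matrix.fromBlocks_multiply]
  have h0L : Matrix.fromBlocks (A3 * A1) (A3 * A3) (A2 * A1) (A2 * A3)
      = Matrix.fromBlocks 0 0 0 (0 : Matrix (Fin d) (Fin d) ℂ) := by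
    rw [Matrix.fromBlocks_zero, ← hDLD, hblocks, hL]
    simp [Matrix.fromBlocks_multiply]
  rw [Matrix.fromBlocks_inj] at h0U h0L
  obtain ⟨h14, h12, h44, h42⟩ := h0U
  obtain ⟨h31, h33, h21, h23⟩ := h0L
  -- the rectangular pieces
  set E : Matrix (Fin d) (Fin d ⊕ Fin d) ℂ := Matrix.fromCols 1 1 with hE
  set F : Matrix (Fin d ⊕ Fin d) (Fin d) ℂ := Matrix.fromRows 1 1 with hF
  have hFE : F * E = W := by
    have h1 : (1 : Matrix (Fin d ⊕ Fin d) (Fin d ⊕ Fin d) ℂ) = Matrix.fromBlocks 1 0 0 1 :=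
      Matrix.fromBlocks_one.symm
    rw [hF, hE, hW, hU, hL, Matrix.fromRows_mul_fromCols, h1,
      Matrix.fromBlocks_add, Matrix.fromBlocks_add]
    simp
  have hETF : E * T * F = N := by
    rw [hE, hT, hF, Matrix.fromCols_mul_fromBlocks, Matrix.fromCols_mul_fromRows, hN]
    noncomm_ring
  have hEDF : E * Td * F = A1 + A2 + A3 + A4 := by
    rw [hE, hblocks, hF, Matrix.fromCols_mul_fromBlocks, Matrix.fromCols_mul_fromRows]
    noncomm_ring
  -- the key sandwich identity
  have hA : ∀ M M' : Matrix (Fin d ⊕ Fin d) (Fin d ⊕ Fin d) ℂ,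
      (E * M * F) * (E * M' * F) = E * (M * W * M') * F := by
    intro M M'
    calc (E * M * F) * (E * M' * F) = (E * M) * (F * E) * (M' * F) := by
          simp only [Matrix.mul_assoc]
    _ = (E * M) * W * (M' * F) := by rw [hFE]
    _ = E * (M * W * M') * F := by simp only [Matrix.mul_assoc]
  -- square-algebra consequences
  have hTWD : T * W * Td = T * Td := by
    calc T * W * Td = T * Td + T * U * Td + T * L * Td := by rw [hW]; noncomm_ring
    _ = T * Td := by rw [hTUD, hTLD, add_zero, add_zero]
  have hDWT : Td * W * T = Td * T := by
    calc Td * W * T = Td * T + Td * U * T + Td * L * T := by rw [hW]; noncomm_ring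
    _ = Td * T := by rw [hDUT, hDLT, add_zero, add_zero]
  have hTWT : T * W * T = T * T := by
    calc T * W * T = T * T + T * U * T + T * L * T := by rw [hW]; noncomm_ring
    _ = T * T := by rw [hTUT, hTLT, add_zero, add_zero]
  have hDTWD : Td * T * W * Td = Td := by
    calc Td * T * W * Td = Td * (T * W * Td) := by simp only [mul_assoc]
    _ = Td * (T * Td) := by rw [hTWD]
    _ = Td := by rw [← mul_assoc, hdtd]
  have wTT : ∀ m : ℕ, T ^ (m + 1) * W * T = T ^ (m + 2) := by
    intro m
    calc T ^ (m + 1) * W * T = T ^ m * (T * W * T) := by rw [pow_succ]; simp only [mul_assoc]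
    _ = T ^ m * (T * T) := by rw [hTWT]
    _ = T ^ (m + 2) := by rw [pow_succ, pow_succ, mul_assoc]
  have wTD : ∀ m : ℕ, T ^ (m + 1) * W * Td = T ^ (m + 1) * Td := by
    intro m
    calc T ^ (m + 1) * W * Td = T ^ m * (T * W * Td) := by rw [pow_succ]; simp only [mul_assoc]
    _ = T ^ m * (T * Td) := by rw [hTWD]
    _ = T ^ (m + 1) * Td := by rw [pow_succ, mul_assoc]
  -- powers of N
  have hpow : ∀ m : ℕ, N ^ (m + 1) = E * T ^ (m + 1) * F := by
    intro m
    induction m with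
    | zero => rw [pow_one, pow_one, hETF]
    | succ m ih =>
      calc N ^ (m + 2) = N ^ (m + 1) * N := pow_succ N (m + 1)
      _ = (E * T ^ (m + 1) * F) * (E * T * F) := by rw [ih, ← hETF]
      _ = E * (T ^ (m + 1) * W * T) * F := hA _ _
      _ = E * T ^ (m + 2) * F := by rw [wTT m]
  have hk2 : T ^ (k + 1 + 1) * Td = T ^ (k + 1) := by
    calc T ^ (k + 1 + 1) * Td = T * (T ^ (k + 1) * Td) := by rw [pow_succ']; rw [mul_assoc]
    _ = T * T ^ k := by rw [hk]
    _ = T ^ (k + 1) := by rw [← pow_succ']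
  refine ⟨⟨?_, ?_, k + 1, ?_⟩, h12, h21, h14, h42, h23, h31, ?_, ?_⟩
  · -- N * X = X * N
    rw [← hETF, ← hEDF, hA, hA, hTWD, hDWT, hc]
  · -- X * N * X = X
    rw [← hETF, ← hEDF, hA, hDWT, hA]
    rw [hDTWD]
  · -- N^(k+2) * X = N^(k+1)
    calc N ^ (k + 1 + 1) * (A1 + A2 + A3 + A4)
        = (E * T ^ (k + 1 + 1) * F) * (E * Td * F) := by rw [hpow (k + 1), ← hEDF]
    _ = E * (T ^ (k + 1 + 1) * W * Td) * F := hA _ _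
    _ = E * (T ^ (k + 1 + 1) * Td) * F := by rw [wTD (k + 1)]
    _ = E * T ^ (k + 1) * F := by rw [hk2]
    _ = N ^ (k + 1) := (hpow k).symm
  · rw [pow_two]; exact h33
  · rw [pow_two]; exact h44
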